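/- For all i ≠ j and each sign ε ∈ {+1,−1}, the idempotent I_{ij}^ε satisfies the inhomogeneous proper-value equation (K+1)(I_{ij}^ε) = 2 I_{ij}^ε − 1 (proper value 2, co-value −1). -/
import Mathlib


open scoped TensorProduct

noncomputable section

/-- The standard positive-definite quadratic form on `ℝ³`. -/
abbrev Q3 : QuadraticForm ℝ (Fin 3 → ℝ) :=
  QuadraticMap.weightedSumSquares ℝ (fun _ : Fin 3 => (1 : ℝ))

/-- The Clifford algebra of 3-dimensional Euclidean space. -/
abbrev Cl3 : Type := CliffordAlgebra Q3

/-- The tensor product of two copies of `Cl3`, as ℝ-algebras. -/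
abbrev A3 : Type := Cl3 ⊗[ℝ] Cl3

/-- The generators `e₁, e₂, e₃` (indexed by `Fin 3`). -/
def e (l : Fin 3) : Cl3 := CliffordAlgebra.ι Q3 (Pi.single l 1)

/-- `X_l := e_l ⊗ e_l`. -/
def X (l : Fin 3) : A3 := e l ⊗ₜ[ℝ] e l

/-- `w^i := (e_j e_k) ⊗ 1` for `(i,j,k)` a cyclic permutation of the indices. -/
def w (i : Fin 3) : A3 := (e (i + 1) * e (i + 2)) ⊗ₜ[ℝ] (1 : Cl3)

/-- The (ℝ-linear) operators `J_l(U) := (1/2)(w^l U − U w^l)`. -/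
def J (l : Fin 3) (U : A3) : A3 := (1/2 : ℝ) • (w l * U - U * w l)

/-- Kähler's total angular momentum operator `K+1`. -/
def K1 (U : A3) : A3 := J 0 U * w 0 + J 1 U * w 1 + J 2 U * w 2

/-- The idempotents `I_{ij}^ε := (1/2)(1 + ε X_i X_j)`. -/
def Iem (i j : Fin 3) (ε : ℝ) : A3 := (1/2 : ℝ) • ((1 : A3) + ε • (X i * X j))

/-- The idempotents `P_l^δ := (1/2)(1 + δ X_l)`. -/
def P (l : Fin 3) (δ : ℝ) : A3 := (1/2 : ℝ) • ((1 : A3) + δ • X l)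


section Aux

lemma Q3_single (l : Fin 3) : Q3 (Pi.single l 1) = 1 := by
  fin_cases l <;>
    simp [QuadraticMap.weightedSumSquares_apply, Fin.sum_univ_three, Pi.single_apply]

lemma e_sq (l : Fin 3) : e l * e l = 1 := by
  rw [e, CliffordAlgebra.ι_sq_scalar, Q3_single, map_one]

lemma polar_single (l m : Fin 3) (h : l ≠ m) :
    QuadraticMap.polar Q3 (Pi.single l 1) (Pi.single m 1) = 0 := by
  fin_cases l <;> fin_cases m <;> simp_all <;>
    simp [QuadraticMap.polar, QuadraticMap.weightedSumSquares_apply,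
      Fin.sum_univ_three, Pi.single_apply]

lemma e_anticomm (l m : Fin 3) (h : l ≠ m) : e l * e m = -(e m * e l) := by
  have := CliffordAlgebra.ι_mul_ι_add_swap (Q := Q3) (Pi.single l 1) (Pi.single m 1)
  rw [polar_single l m h, map_zero] at this
  rw [e, e]
  exact eq_neg_of_add_eq_zero_left this

lemma e_sq' (l : Fin 3) (x : Cl3) : e l * (e l * x) = x := by
  rw [← mul_assoc, e_sq, one_mul]

lemma e10 : e 1 * e 0 = -(e 0 * e 1) := e_anticomm 1 0 (by decide)
lemma e20 : e 2 * e 0 = -(e 0 * e 2) := e_anticomm 2 0 (by decide)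
lemma e21 : e 2 * e 1 = -(e 1 * e 2) := e_anticomm 2 1 (by decide)
lemma e10' (x : Cl3) : e 1 * (e 0 * x) = -(e 0 * (e 1 * x)) := by
  rw [← mul_assoc, e10, neg_mul, mul_assoc]
lemma e20' (x : Cl3) : e 2 * (e 0 * x) = -(e 0 * (e 2 * x)) := by
  rw [← mul_assoc, e20, neg_mul, mul_assoc]
lemma e21' (x : Cl3) : e 2 * (e 1 * x) = -(e 1 * (e 2 * x)) := by
  rw [← mul_assoc, e21, neg_mul, mul_assoc]

/-- The bivector `e_{l+1} e_{l+2}`, the first tensor factor of `w l`. -/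
def B (l : Fin 3) : Cl3 := e (l + 1) * e (l + 2)

lemma B_sq (l : Fin 3) : B l * B l = -1 := by
  fin_cases l <;>
    simp [B, mul_assoc, e_sq, e_sq', e10, e20, e21, e10', e20', e21',
      mul_neg, neg_neg, mul_one]

lemma sumB (i j : Fin 3) (hij : i ≠ j) :
    B 0 * (e i * e j) * B 0 + B 1 * (e i * e j) * B 1 + B 2 * (e i * e j) * B 2
      = e i * e j := by
  fin_cases i <;> fin_cases j <;> simp_all <;>
    simp [B, mul_assoc, e_sq, e_sq', e10, e20, e21, e10', e20', e21',
      mul_neg, neg_neg, mul_one]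

lemma w_eq (l : Fin 3) : w l = B l ⊗ₜ[ℝ] (1 : Cl3) := rfl

lemma Jw_tmul (l : Fin 3) (a c : Cl3) :
    J l (a ⊗ₜ[ℝ] c) * w l = (1/2 : ℝ) • ((B l * a * B l + a) ⊗ₜ[ℝ] c) := by
  rw [J, w_eq, smul_mul_assoc, sub_mul]
  rw [Algebra.TensorProduct.tmul_mul_tmul, Algebra.TensorProduct.tmul_mul_tmul,
    Algebra.TensorProduct.tmul_mul_tmul, Algebra.TensorProduct.tmul_mul_tmul]
  rw [mul_assoc a, B_sq, mul_neg_one, one_mul, mul_one, mul_one]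
  rw [TensorProduct.neg_tmul, sub_neg_eq_add, ← TensorProduct.add_tmul]

lemma K1_tmul (a c : Cl3) :
    K1 (a ⊗ₜ[ℝ] c) =
      (1/2 : ℝ) • ((B 0 * a * B 0 + B 1 * a * B 1 + B 2 * a * B 2 + (a + a + a)) ⊗ₜ[ℝ] c) := by
  rw [K1, Jw_tmul, Jw_tmul, Jw_tmul, ← smul_add, ← smul_add,
    ← TensorProduct.add_tmul, ← TensorProduct.add_tmul]
  congr 2
  abel

lemma J_add (l : Fin 3) (u v : A3) : J l (u + v) = J l u + J l v := by
  simp only [J, mul_add, add_mul]; module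

lemma J_smul (l : Fin 3) (r : ℝ) (u : A3) : J l (r • u) = r • J l u := by
  simp [J, mul_smul_comm, smul_mul_assoc, smul_sub, smul_smul, mul_comm]

lemma K1_add (u v : A3) : K1 (u + v) = K1 u + K1 v := by
  simp [K1, J_add, add_mul]; abel

lemma K1_smul (r : ℝ) (u : A3) : K1 (r • u) = r • K1 u := by
  simp [K1, J_smul, smul_mul_assoc, smul_add]

lemma K1_one : K1 (1 : A3) = 0 := by
  rw [Algebra.TensorProduct.one_def, K1_tmul]
  rw [mul_one, mul_one, mul_one, B_sq, B_sq, B_sq]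
  norm_num

end Aux

/-- For `i ≠ j` and each sign `ε`, the idempotent `I_{ij}^ε` satisfies the
inhomogeneous proper-value equation `(K+1)(I_{ij}^ε) = 2 I_{ij}^ε − 1`. -/
theorem stmt4 (i j : Fin 3) (hij : i ≠ j) (ε : ℝ) (hε : ε = 1 ∨ ε = -1) :
    K1 (Iem i j ε) = 2 * Iem i j ε - 1 := by
  have hX : X i * X j = (e i * e j) ⊗ₜ[ℝ] (e i * e j) := by
    rw [X, X, Algebra.TensorProduct.tmul_mul_tmul]
  have hK : K1 (X i * X j) = (2:ℝ) • (X i * X j) := by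
    rw [hX, K1_tmul, sumB i j hij]
    rw [show e i * e j + (e i * e j + e i * e j + e i * e j)
        = (4 : ℝ) • (e i * e j) by module]
    rw [TensorProduct.smul_tmul', smul_smul]
    norm_num [TensorProduct.smul_tmul']
  rw [Iem, K1_smul, K1_add, K1_one, zero_add, K1_smul, hK]
  have h2 : ∀ y : A3, (2 : A3) * y = (2 : ℝ) • y := by
    intro y; rw [Algebra.smul_def, map_ofNat]
  rw [h2]
  module
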